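/- If X is a removable vertex in a MAG H over vertices V, then the size of the Markov boundary of X with respect to V is at most δ⁺(H) = max over vertices Z of |Pa⁺(Z)|, where Pa⁺(Z) = Pa(Z) ∪ Dis(Z) ∪ Pa(Dis(Z)) ∪ N(Z). -/

import Mathlib

/-- A mixed graph with directed (`dir x y` : x → y), bidirected and undirected edges. -/
structure MixedGraph (V : Type*) where
  dir : V → V → Prop
  bi : V → V → Prop
  und : V → V → Prop
  bi_symm : ∀ x y, bi x y → bi y x
  und_symm : ∀ x y, und x y → und y x

namespace MixedGraph

variable {V : Type*}

def adj (G : MixedGraph V) (x y : V) : Prop :=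
  G.dir x y ∨ G.dir y x ∨ G.bi x y ∨ G.und x y

/-- There is an arrowhead at `y` on the edge between `x` and `y`. -/
def head (G : MixedGraph V) (x y : V) : Prop := G.dir x y ∨ G.bi x y

def pa (G : MixedGraph V) (x : V) : Set V := {y | G.dir y x}
def child (G : MixedGraph V) (x : V) : Set V := {y | G.dir x y}
def nbr (G : MixedGraph V) (x : V) : Set V := {y | G.und x y}
def spouse (G : MixedGraph V) (x : V) : Set V := {y | G.bi x y}

/-- `x` is an ancestor of `y` (every vertex is an ancestor of itself). -/
def anc (G : MixedGraph V) (x y : V) : Prop := Relation.ReflTransGen G.dir x y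

def ancSet (G : MixedGraph V) (S : Set V) : Set V := {x | ∃ y ∈ S, G.anc x y}

/-- The set of descendants of `x` (including `x` itself). -/
def desc (G : MixedGraph V) (x : V) : Set V := {y | G.anc x y}

/-- A path, encoded as a duplicate-free list of at least two vertices with
consecutive vertices adjacent. -/
def IsPath (G : MixedGraph V) (p : List V) : Prop :=
  p.Chain' G.adj ∧ p.Nodup ∧ 2 ≤ p.length

def IsPathBetween (G : MixedGraph V) (p : List V) (x y : V) : Prop :=
  G.IsPath p ∧ p.head? = some x ∧ p.getLast? = some y

/-- The vertex at (internal) position `i` of `p` is a collider: both incident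
path edges have an arrowhead at it. -/
def ColliderAt (G : MixedGraph V) (p : List V) (i : ℕ) : Prop :=
  ∃ a v c, p[i-1]? = some a ∧ p[i]? = some v ∧ p[i+1]? = some c ∧
    G.head a v ∧ G.head c v

/-- A collider path: every non-endpoint vertex is a collider. -/
def IsColliderPath (G : MixedGraph V) (p : List V) : Prop :=
  G.IsPath p ∧ ∀ i, 1 ≤ i → i + 1 < p.length → G.ColliderAt p i

/-- `p` is an m-connecting path between `x` and `y` relative to `Z`. -/
def MConn (G : MixedGraph V) (p : List V) (x y : V) (Z : Set V) : Prop :=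
  G.IsPathBetween p x y ∧
  ∀ i v, 1 ≤ i → i + 1 < p.length → p[i]? = some v →
    (G.ColliderAt p i → v ∈ G.ancSet ({x, y} ∪ Z)) ∧
    (¬ G.ColliderAt p i → v ∉ Z)

/-- `Z` m-separates `x` and `y` in `G`. -/
def MSep (G : MixedGraph V) (x y : V) (Z : Set V) : Prop :=
  ∀ p, ¬ G.MConn p x y Z

/-- Induced subgraph over a set `S` of vertices. -/
def induce (G : MixedGraph V) (S : Set V) : MixedGraph V where
  dir x y := G.dir x y ∧ x ∈ S ∧ y ∈ S
  bi x y := G.bi x y ∧ x ∈ S ∧ y ∈ S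
  und x y := G.und x y ∧ x ∈ S ∧ y ∈ S
  bi_symm := fun x y h => ⟨G.bi_symm x y h.1, h.2.2, h.2.1⟩
  und_symm := fun x y h => ⟨G.und_symm x y h.1, h.2.2, h.2.1⟩

/-- `X` is removable in `G`: the induced subgraph on the remaining vertices
imposes exactly the same m-separation relations over them as `G`. -/
def Removable (G : MixedGraph V) (X : V) : Prop :=
  ∀ Y W : V, Y ≠ X → W ≠ X → Y ≠ W →
    ∀ Z : Set V, Z ⊆ {v | v ≠ X ∧ v ≠ Y ∧ v ≠ W} →
      (G.MSep Y W Z ↔ (G.induce {v | v ≠ X}).MSep Y W Z)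

/-- Ancestral: no directed cycles, no almost directed cycles, and endpoints of
undirected edges have no parents or spouses. -/
def Ancestral (G : MixedGraph V) : Prop :=
  (∀ x y, G.dir x y → ¬ G.anc y x) ∧
  (∀ x y, G.bi x y → ¬ G.anc y x) ∧
  (∀ x y, G.und x y → ∀ z, ¬ G.dir z x ∧ ¬ G.bi z x)

/-- A maximal ancestral graph: ancestral, and any two non-adjacent vertices are
m-separated by some set. -/
def IsMAG (G : MixedGraph V) : Prop :=
  G.Ancestral ∧
  ∀ x y, x ≠ y → ¬ G.adj x y →
    ∃ Z : Set V, Z ⊆ {v | v ≠ x ∧ v ≠ y} ∧ G.MSep x y Z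

/-- Markov boundary of `x`: the vertices with a collider path to `x`. -/
def Mb (G : MixedGraph V) (x : V) : Set V :=
  {y | ∃ p, G.IsColliderPath p ∧ p.head? = some y ∧ p.getLast? = some x}

/-- District of `x`: vertices joined to `x` by a path of bidirected edges. -/
def district (G : MixedGraph V) (x : V) : Set V :=
  {y | Relation.ReflTransGen G.bi x y}

/-- `Pa⁺(x) = Pa(x) ∪ Dis(x) ∪ Pa(Dis(x)) ∪ N(x)`. -/
def paPlus (G : MixedGraph V) (x : V) : Set V :=
  G.pa x ∪ G.district x ∪ (⋃ y ∈ G.district x, G.pa y) ∪ G.nbr x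

noncomputable def deltaPlus [Fintype V] (G : MixedGraph V) : ℕ :=
  Finset.univ.sup fun z : V => (G.paPlus z).ncard

/-- Condition 1 of the graphical characterization of removability. -/
def RemCond1 (G : MixedGraph V) (X : V) : Prop :=
  ∀ Y Z : V, G.adj X Y → Z ∈ G.child X ∪ G.nbr X → Z ≠ Y → G.adj Y Z

/-- Condition 2 of the graphical characterization of removability. -/
def RemCond2 (G : MixedGraph V) (X : V) : Prop :=
  ∀ (p : List V) (Y Z : V), G.IsColliderPath p → p.head? = some X →
    p.getLast? = some Y → Z ∉ p → (∀ v ∈ p.dropLast, G.dir v Z) → G.adj Y Z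

end MixedGraph

namespace MixedGraph

variable {V : Type*} {G : MixedGraph V}

lemma anc_refl (x : V) : G.anc x x := Relation.ReflTransGen.refl

lemma anc_trans {x y z : V} (h1 : G.anc x y) (h2 : G.anc y z) : G.anc x z :=
  Relation.ReflTransGen.trans h1 h2

lemma anc_of_dir {x y : V} (h : G.dir x y) : G.anc x y :=
  Relation.ReflTransGen.single h

lemma anc_antisymm (hA : G.Ancestral) {x y : V} (h1 : G.anc x y) (h2 : G.anc y x) : x = y := by
  rcases Relation.ReflTransGen.cases_head h1 with h | ⟨c, hc, hcy⟩
  · exact h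
  · exact absurd (hcy.trans h2) (hA.1 _ _ hc)

lemma not_dir_of_dir (hA : G.Ancestral) {x y : V} (h : G.dir x y) : ¬ G.dir y x :=
  fun h' => hA.1 _ _ h (anc_of_dir h')

lemma not_bi_of_dir (hA : G.Ancestral) {x y : V} (h : G.dir x y) : ¬ G.bi x y :=
  fun h' => hA.2.1 _ _ (G.bi_symm _ _ h') (anc_of_dir h)

lemma head_head_bi (hA : G.Ancestral) {x y : V} (h1 : G.head x y) (h2 : G.head y x) :
    G.bi x y := by
  rcases h1 with h1 | h1
  · rcases h2 with h2 | h2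
    · exact absurd h2 (not_dir_of_dir hA h1)
    · exact absurd (G.bi_symm _ _ h2) (not_bi_of_dir hA h1)
  · exact h1

lemma not_head_of_und (hA : G.Ancestral) {x y : V} (h : G.und x y) (z : V) : ¬ G.head z x := by
  rintro (hz | hz)
  · exact (hA.2.2 x y h z).1 hz
  · exact (hA.2.2 x y h z).2 hz

lemma adj_of_head {x y : V} (h : G.head x y) : G.adj x y := by
  rcases h with h | h
  · exact Or.inl h
  · exact Or.inr (Or.inr (Or.inl h))

lemma adj_symm {x y : V} (h : G.adj x y) : G.adj y x := by
  rcases h with h | h | h | h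
  · exact Or.inr (Or.inl h)
  · exact Or.inl h
  · exact Or.inr (Or.inr (Or.inl (G.bi_symm _ _ h)))
  · exact Or.inr (Or.inr (Or.inr (G.und_symm _ _ h)))

/-- district facts -/
lemma mem_district_self (x : V) : x ∈ G.district x := Relation.ReflTransGen.refl

lemma mem_district_of_bi {x y : V} (h : G.bi x y) : y ∈ G.district x :=
  Relation.ReflTransGen.single h

lemma district_trans {x y z : V} (h1 : y ∈ G.district x) (h2 : z ∈ G.district y) :
    z ∈ G.district x := Relation.ReflTransGen.trans h1 h2

lemma district_symm {x y : V} (h : y ∈ G.district x) : x ∈ G.district y := by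
  induction h with
  | refl => exact Relation.ReflTransGen.refl
  | tail _ hbi ih =>
      exact Relation.ReflTransGen.trans (Relation.ReflTransGen.single (G.bi_symm _ _ hbi)) ih

lemma district_tail {x y z : V} (h1 : y ∈ G.district x) (h2 : G.bi y z) :
    z ∈ G.district x := Relation.ReflTransGen.tail h1 h2

/-- paPlus membership helpers -/
lemma mem_paPlus_pa {y z : V} (h : G.dir y z) : y ∈ G.paPlus z := by
  left; left; left; exact h

lemma mem_paPlus_dis {y z : V} (h : y ∈ G.district z) : y ∈ G.paPlus z := by
  left; left; right; exact h

lemma mem_paPlus_paDis {y u z : V} (hu : u ∈ G.district z) (h : G.dir y u) : y ∈ G.paPlus z := by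
  left; right; exact Set.mem_biUnion hu h

lemma mem_paPlus_nbr {y z : V} (h : G.und z y) : y ∈ G.paPlus z := by
  right; exact h

end MixedGraph

namespace MixedGraph

variable {V : Type*} {G : MixedGraph V}

lemma getLast?_eq_getElem? {l : List V} (h : l ≠ []) : l.getLast? = l[l.length - 1]? := by
  rw [List.getLast?_eq_getLast h,
    List.getElem?_eq_getElem (by have := List.length_pos_iff.mpr h; omega)]
  simp [List.getLast_eq_getElem]

lemma chain'_getElem {R : V → V → Prop} {l : List V} (h : l.Chain' R) {i : ℕ}
    (hi : i + 1 < l.length) : R l[i] l[i+1] := by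
  have := List.isChain_iff_getElem.mp h i (by omega)
  simpa using this

lemma chain'_of_getElem {R : V → V → Prop} {l : List V}
    (h : ∀ (i : ℕ) (_ : i + 1 < l.length), R l[i] l[i+1]) : l.Chain' R := by
  refine List.isChain_iff_getElem.mpr ?_
  intro i hi
  simpa using h i (by omega)

lemma chain'_bi_rtg {l : List V} (h : l.Chain' G.bi) {i j : ℕ} (hij : i ≤ j)
    (hj : j < l.length) : Relation.ReflTransGen G.bi l[i] l[j] := by
  induction j with
  | zero =>
    have : i = 0 := by omega
    subst this; exact Relation.ReflTransGen.refl
  | succ j ih =>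
    rcases Nat.eq_or_lt_of_le hij with he | hlt
    · subst he; exact Relation.ReflTransGen.refl
    · exact Relation.ReflTransGen.tail (ih (by omega) (by omega)) (chain'_getElem h (by omega))

lemma colliderAt_heads {p : List V} {i : ℕ} {a v c : V} (h : G.ColliderAt p i)
    (ha : p[i-1]? = some a) (hv : p[i]? = some v) (hc : p[i+1]? = some c) :
    G.head a v ∧ G.head c v := by
  obtain ⟨a', v', c', ha', hv', hc', h1, h2⟩ := h
  rw [ha] at ha'; rw [hv] at hv'; rw [hc] at hc'
  cases ha'; cases hv'; cases hc'
  exact ⟨h1, h2⟩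

lemma isColliderPath_tail {a : V} {p : List V} (h : G.IsColliderPath (a :: p))
    (hp : 2 ≤ p.length) : G.IsColliderPath p := by
  obtain ⟨⟨hch, hnd, _⟩, hcol⟩ := h
  refine ⟨⟨hch.tail, hnd.of_cons, hp⟩, ?_⟩
  intro i h1 h2
  have hc := hcol (i+1) (by omega) (by simp; omega)
  obtain ⟨a', v', c', ha', hv', hc', hh1, hh2⟩ := hc
  refine ⟨a', v', c', ?_, ?_, ?_, hh1, hh2⟩
  · have : i + 1 - 1 = (i - 1) + 1 := by omega
    rw [this, List.getElem?_cons_succ] at ha'; exact ha'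
  · rw [List.getElem?_cons_succ] at hv'; exact hv'
  · rw [List.getElem?_cons_succ] at hc'; exact hc'

lemma mem_Mb_of_colliderPath {p : List V} {x y : V} (h : G.IsColliderPath p)
    (hlast : p.getLast? = some x) (hy : y ∈ p) (hyx : y ≠ x) : y ∈ G.Mb x := by
  induction p with
  | nil => simp at hy
  | cons a t ih =>
    rcases List.mem_cons.mp hy with hya | hyt
    · rw [hya]; exact ⟨a :: t, h, rfl, hlast⟩
    · have htne : t ≠ [] := List.ne_nil_of_mem hyt
      have hlast' : t.getLast? = some x := by
        rw [show a :: t = [a] ++ t from rfl, List.getLast?_append_of_ne_nil _ htne] at hlast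
        exact hlast
      rcases t with _ | ⟨b, t'⟩
      · exact absurd rfl htne
      · rcases t' with _ | ⟨c, t''⟩
        · simp at hyt hlast'
          exact absurd (hyt.trans hlast') hyx
        · exact ih (isColliderPath_tail h (by simp)) hlast' hyt

lemma not_mem_Mb_self (x : V) : x ∉ G.Mb x := by
  rintro ⟨p, ⟨⟨_, hnd, hlen⟩, _⟩, hh, hl⟩
  have hne : p ≠ [] := by intro h; rw [h] at hlen; simp at hlen
  have h0 : p[0]? = some x := by rwa [← List.head?_eq_getElem?]
  have hn : p[p.length - 1]? = some x := by rwa [getLast?_eq_getElem? hne] at hl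
  have h0' : p[0]'(by omega) = x := by
    rw [List.getElem?_eq_getElem (by omega)] at h0; exact Option.some.inj h0
  have hn' : p[p.length - 1]'(by omega) = x := by
    rw [List.getElem?_eq_getElem (by omega)] at hn; exact Option.some.inj hn
  have := (List.Nodup.getElem_inj_iff hnd).mp (h0'.trans hn'.symm)
  omega

end MixedGraph

namespace MixedGraph

variable {V : Type*} {G : MixedGraph V}

lemma colliderAt_head_left {p : List V} {i : ℕ} {a v : V} (h : G.ColliderAt p i)
    (ha : p[i-1]? = some a) (hv : p[i]? = some v) : G.head a v := by
  obtain ⟨a', v', c', ha', hv', hc', h1, _⟩ := h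
  rw [ha] at ha'; rw [hv] at hv'
  cases ha'; cases hv'; exact h1

lemma colliderAt_head_right {p : List V} {i : ℕ} {v c : V} (h : G.ColliderAt p i)
    (hv : p[i]? = some v) (hc : p[i+1]? = some c) : G.head c v := by
  obtain ⟨a', v', c', ha', hv', hc', _, h2⟩ := h
  rw [hv] at hv'; rw [hc] at hc'
  cases hv'; cases hc'; exact h2

lemma colliderPath_struct (hA : G.Ancestral) {p : List V} {a b : V}
    (h : G.IsColliderPath p) (hh : p.head? = some a) (hl : p.getLast? = some b) :
    ∃ l : List V, p = a :: (l ++ [b]) ∧ l.Chain' G.bi ∧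
      (l = [] → G.adj a b) ∧
      (∀ h0 : 0 < l.length, G.head a (l[0]'h0) ∧ G.head b (l[l.length - 1]'(by omega))) := by
  obtain ⟨⟨hch, hnd, hlen⟩, hcol⟩ := h
  rcases p with _ | ⟨a0, t⟩
  · simp at hh
  have ha0 : a = a0 := by simpa using hh.symm
  subst ha0
  have htne : t ≠ [] := by
    intro ht; rw [ht] at hlen; simp at hlen
  have hlt : t.getLast? = some b := by
    rw [show a :: t = [a] ++ t from rfl, List.getLast?_append_of_ne_nil _ htne] at hl
    exact hl
  obtain ⟨l, htl⟩ : ∃ l, t = l ++ [b] := by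
    refine ⟨t.dropLast, ?_⟩
    have h1 := List.dropLast_append_getLast htne
    rw [List.getLast?_eq_getLast htne] at hlt
    rw [Option.some.inj hlt] at h1
    exact h1.symm
  subst htl
  have hplen : (a :: (l ++ [b])).length = l.length + 2 := by simp
  have hpi : ∀ i (_ : i < l.length), (a :: (l ++ [b]))[i+1]? = some (l[i]'(by omega)) := by
    intro i hi
    rw [List.getElem?_cons_succ, List.getElem?_append, if_pos hi, List.getElem?_eq_getElem hi]
  have hpb : (a :: (l ++ [b]))[l.length + 1]? = some b := by
    rw [List.getElem?_cons_succ, List.getElem?_append, if_neg (by omega)]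
    simp
  refine ⟨l, rfl, ?_, ?_, ?_⟩
  · apply chain'_of_getElem
    intro i hi
    have col2 := hcol (i+2) (by omega) (by omega)
    have col1 := hcol (i+1) (by omega) (by omega)
    have e1 := hpi i (by omega)
    have e2 := hpi (i+1) (by omega)
    have hd1 : G.head (l[i]'(by omega)) l[i+1] := by
      refine colliderAt_head_left col2 ?_ ?_
      · simpa using e1
      · simpa using e2
    have hd2 : G.head l[i+1] (l[i]'(by omega)) := by
      refine colliderAt_head_right col1 ?_ ?_
      · simpa using e1
      · simpa using e2
    exact head_head_bi hA hd1 hd2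
  · intro hle
    rw [hle] at hch
    simpa using List.isChain_iff_getElem.mp hch 0 (by simp)
  · intro h0
    constructor
    · have col1 := hcol 1 (by omega) (by omega)
      refine colliderAt_head_left col1 (by simp) ?_
      simpa using hpi 0 h0
    · have coll := hcol l.length (by omega) (by omega)
      refine colliderAt_head_right coll ?_ ?_
      · have := hpi (l.length - 1) (by omega)
        rw [show l.length - 1 + 1 = l.length from by omega] at this
        exact this
      · exact hpb

end MixedGraph

namespace MixedGraph

variable {V : Type*} {G : MixedGraph V}

lemma getElem_of_getElem? {l : List V} {i : ℕ} {v : V} (h : l[i]? = some v)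
    (hi : i < l.length) : l[i]'hi = v := by
  rw [List.getElem?_eq_getElem hi] at h; exact Option.some.inj h

lemma getElem_idx_congr {l : List V} {i j : ℕ} (hij : i = j) (hi : i < l.length) :
    l[i]'hi = l[j]'(hij ▸ hi) := by subst hij; rfl

lemma build_mconn (hA : G.Ancestral) {W X Z : V} {l1 r2 : List V} (S : Set V)
    (hc1 : l1.Chain' G.bi) (hc2 : r2.Chain' G.bi)
    (hWl1 : ∀ h : 0 < l1.length, G.head W (l1[0]'h))
    (hXl1 : ∀ h : 0 < l1.length, G.head X (l1[l1.length-1]'(by omega)))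
    (hXr2 : ∀ h : 0 < r2.length, G.head X (r2[0]'h))
    (hZr2 : ∀ h : 0 < r2.length, G.head Z (r2[r2.length-1]'(by omega)))
    (hWX : l1 = [] → G.adj W X)
    (hXZ : r2 = [] → G.adj X Z)
    (hncL : (∀ h : 0 < l1.length, ¬ G.head (l1[l1.length-1]'(by omega)) X) ∧
            (l1 = [] → ¬ G.head W X) ∨
            (∀ h : 0 < r2.length, ¬ G.head (r2[0]'h) X) ∧ (r2 = [] → ¬ G.head Z X))
    (hnd : (W :: (l1 ++ X :: (r2 ++ [Z]))).Nodup)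
    (hS1 : ∀ v ∈ l1, v ∈ S) (hS2 : ∀ v ∈ r2, v ∈ S) (hXS : X ∉ S) :
    G.MConn (W :: (l1 ++ X :: (r2 ++ [Z]))) W Z S := by
  have plen : (W :: (l1 ++ X :: (r2 ++ [Z]))).length = l1.length + r2.length + 3 := by
    simp; omega
  have e0 : (W :: (l1 ++ X :: (r2 ++ [Z])))[0]? = some W := by simp
  have eL : ∀ i (_ : i < l1.length),
      (W :: (l1 ++ X :: (r2 ++ [Z])))[i+1]? = some (l1[i]'(by omega)) := by
    intro i hi
    rw [List.getElem?_cons_succ, List.getElem?_append, if_pos hi, List.getElem?_eq_getElem hi]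
  have eX : (W :: (l1 ++ X :: (r2 ++ [Z])))[l1.length+1]? = some X := by
    rw [List.getElem?_cons_succ, List.getElem?_append, if_neg (by omega)]
    simp
  have eR : ∀ i (_ : i < r2.length),
      (W :: (l1 ++ X :: (r2 ++ [Z])))[l1.length+2+i]? = some (r2[i]'(by omega)) := by
    intro i hi
    rw [show l1.length+2+i = (l1.length+1+i)+1 from by omega, List.getElem?_cons_succ,
      List.getElem?_append, if_neg (by omega),
      show l1.length + 1 + i - l1.length = i + 1 from by omega, List.getElem?_cons_succ,
      List.getElem?_append, if_pos hi, List.getElem?_eq_getElem hi]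
  have eZ : (W :: (l1 ++ X :: (r2 ++ [Z])))[l1.length+r2.length+2]? = some Z := by
    rw [show l1.length+r2.length+2 = (l1.length+r2.length+1)+1 from by omega,
      List.getElem?_cons_succ, List.getElem?_append, if_neg (by omega),
      show l1.length + r2.length + 1 - l1.length = r2.length + 1 from by omega,
      List.getElem?_cons_succ, List.getElem?_append, if_neg (by omega)]
    simp
  have colL : ∀ i (_ : 1 ≤ i) (_ : i ≤ l1.length),
      G.ColliderAt (W :: (l1 ++ X :: (r2 ++ [Z]))) i := by
    intro i h1 h2
    have ev := eL (i-1) (by omega)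
    rw [show i-1+1 = i from by omega] at ev
    have hdL : ∃ a, (W :: (l1 ++ X :: (r2 ++ [Z])))[i-1]? = some a ∧
        G.head a (l1[i-1]'(by omega)) := by
      rcases Nat.eq_or_lt_of_le h1 with h | h
      · refine ⟨W, ?_, ?_⟩
        · rw [show i - 1 = 0 from by omega]; exact e0
        · have := hWl1 (by omega)
          rwa [getElem_idx_congr (show (0:ℕ) = i - 1 from by omega)] at this
      · refine ⟨l1[i-2]'(by omega), ?_, ?_⟩
        · have := eL (i-2) (by omega)
          rwa [show i-2+1 = i-1 from by omega] at this
        · have := chain'_getElem hc1 (i := i-2) (by omega)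
          rw [getElem_idx_congr (show i-2+1 = i-1 from by omega)] at this
          exact Or.inr this
    have hdR : ∃ c, (W :: (l1 ++ X :: (r2 ++ [Z])))[i+1]? = some c ∧
        G.head c (l1[i-1]'(by omega)) := by
      rcases Nat.lt_or_ge i l1.length with h | h
      · refine ⟨l1[i]'h, eL i h, ?_⟩
        have := chain'_getElem hc1 (i := i-1) (by omega)
        rw [getElem_idx_congr (show i-1+1 = i from by omega)] at this
        exact Or.inr (G.bi_symm _ _ this)
      · refine ⟨X, ?_, ?_⟩
        · rw [show i + 1 = l1.length + 1 from by omega]; exact eX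
        · have := hXl1 (by omega)
          rwa [getElem_idx_congr (show l1.length - 1 = i - 1 from by omega)] at this
    obtain ⟨a, ha, hda⟩ := hdL
    obtain ⟨c, hc, hdc⟩ := hdR
    exact ⟨a, _, c, ha, ev, hc, hda, hdc⟩
  have colR : ∀ i (_ : l1.length + 2 ≤ i) (_ : i ≤ l1.length + r2.length + 1),
      G.ColliderAt (W :: (l1 ++ X :: (r2 ++ [Z]))) i := by
    intro i h1 h2
    have ev := eR (i - l1.length - 2) (by omega)
    rw [show l1.length + 2 + (i - l1.length - 2) = i from by omega] at ev
    have hdL : ∃ a, (W :: (l1 ++ X :: (r2 ++ [Z])))[i-1]? = some a ∧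
        G.head a (r2[i - l1.length - 2]'(by omega)) := by
      rcases Nat.eq_or_lt_of_le h1 with h | h
      · refine ⟨X, ?_, ?_⟩
        · rw [show i - 1 = l1.length + 1 from by omega]; exact eX
        · have := hXr2 (by omega)
          rwa [getElem_idx_congr (show (0:ℕ) = i - l1.length - 2 from by omega)] at this
      · refine ⟨r2[i - l1.length - 3]'(by omega), ?_, ?_⟩
        · have := eR (i - l1.length - 3) (by omega)
          rwa [show l1.length + 2 + (i - l1.length - 3) = i-1 from by omega] at this
        · have := chain'_getElem hc2 (i := i - l1.length - 3) (by omega)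
          rw [getElem_idx_congr (show i - l1.length - 3 + 1 = i - l1.length - 2 from by omega)] at this
          exact Or.inr this
    have hdR : ∃ c, (W :: (l1 ++ X :: (r2 ++ [Z])))[i+1]? = some c ∧
        G.head c (r2[i - l1.length - 2]'(by omega)) := by
      rcases Nat.lt_or_ge i (l1.length + r2.length + 1) with h | h
      · refine ⟨r2[i - l1.length - 1]'(by omega), ?_, ?_⟩
        · have := eR (i - l1.length - 1) (by omega)
          rwa [show l1.length + 2 + (i - l1.length - 1) = i+1 from by omega] at this
        · have := chain'_getElem hc2 (i := i - l1.length - 2) (by omega)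
          rw [getElem_idx_congr (show i - l1.length - 2 + 1 = i - l1.length - 1 from by omega)] at this
          exact Or.inr (G.bi_symm _ _ this)
      · refine ⟨Z, ?_, ?_⟩
        · rw [show i + 1 = l1.length + r2.length + 2 from by omega]; exact eZ
        · have := hZr2 (by omega)
          rwa [getElem_idx_congr (show r2.length - 1 = i - l1.length - 2 from by omega)] at this
    obtain ⟨a, ha, hda⟩ := hdL
    obtain ⟨c, hc, hdc⟩ := hdR
    exact ⟨a, _, c, ha, ev, hc, hda, hdc⟩
  have ncolX : ¬ G.ColliderAt (W :: (l1 ++ X :: (r2 ++ [Z]))) (l1.length + 1) := by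
    rintro ⟨a, v, c, ha, hv, hc, hd1, hd2⟩
    rw [eX] at hv
    cases hv
    rcases hncL with ⟨hn1, hn2⟩ | ⟨hn1, hn2⟩
    · rcases Nat.eq_zero_or_pos l1.length with h0 | h0
      · have hl1 : l1 = [] := List.length_eq_zero_iff.mp h0
        rw [show l1.length + 1 - 1 = 0 from by omega, e0] at ha
        cases ha
        exact hn2 hl1 hd1
      · have := eL (l1.length - 1) (by omega)
        rw [show l1.length - 1 + 1 = l1.length + 1 - 1 from by omega] at this
        rw [this] at ha; cases ha
        exact hn1 h0 hd1
    · rcases Nat.eq_zero_or_pos r2.length with h0 | h0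
      · have hr2 : r2 = [] := List.length_eq_zero_iff.mp h0
        rw [show l1.length + 1 + 1 = l1.length + r2.length + 2 from by omega, eZ] at hc
        cases hc
        exact hn2 hr2 hd2
      · have := eR 0 h0
        rw [show l1.length + 2 + 0 = l1.length + 1 + 1 from by omega] at this
        rw [this] at hc; cases hc
        exact hn1 h0 hd2
  refine ⟨⟨⟨?_, hnd, by rw [plen]; omega⟩, rfl, ?_⟩, ?_⟩
  · -- Chain' adj
    apply chain'_of_getElem
    intro i hi
    rw [plen] at hi
    rcases Nat.eq_zero_or_pos i with h0 | h0
    · subst h0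
      rcases Nat.eq_zero_or_pos l1.length with hm0 | hm0
      · have hl1 : l1 = [] := List.length_eq_zero_iff.mp hm0
        rw [getElem_of_getElem? e0 (by omega),
          getElem_of_getElem? (show (W :: (l1 ++ X :: (r2 ++ [Z])))[0+1]? = some X by
            rw [show (0:ℕ)+1 = l1.length+1 from by omega]; exact eX) (by omega)]
        exact hWX hl1
      · rw [getElem_of_getElem? e0 (by omega),
          getElem_of_getElem? (by simpa using eL 0 hm0) (by omega)]
        exact adj_of_head (hWl1 hm0)
    · rcases Nat.lt_or_ge i (l1.length + 1) with hiL | hiL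
      · have ev := eL (i-1) (by omega)
        rw [show i - 1 + 1 = i from by omega] at ev
        rcases Nat.lt_or_ge (i+1) (l1.length+1) with h2 | h2
        · rw [getElem_of_getElem? ev (by omega),
            getElem_of_getElem? (eL i (by omega)) (by omega)]
          have := chain'_getElem hc1 (i := i-1) (by omega)
          rw [getElem_idx_congr (show i - 1 + 1 = i from by omega)] at this
          exact Or.inr (Or.inr (Or.inl this))
        · rw [getElem_of_getElem? ev (by omega),
            getElem_of_getElem? (show (W :: (l1 ++ X :: (r2 ++ [Z])))[i+1]? = some X by
              rw [show i+1 = l1.length+1 from by omega]; exact eX) (by omega)]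
          have := hXl1 (by omega)
          rw [getElem_idx_congr (show l1.length - 1 = i - 1 from by omega)] at this
          exact adj_symm (adj_of_head this)
      · rcases Nat.eq_or_lt_of_le hiL with h2 | h2
        · rcases Nat.eq_zero_or_pos r2.length with hk0 | hk0
          · have hr2 : r2 = [] := List.length_eq_zero_iff.mp hk0
            rw [getElem_of_getElem? (show (W :: (l1 ++ X :: (r2 ++ [Z])))[i]? = some X by rw [← h2]; exact eX) (by omega),
              getElem_of_getElem? (show (W :: (l1 ++ X :: (r2 ++ [Z])))[i+1]? = some Z by
                rw [show i+1 = l1.length+r2.length+2 from by omega]; exact eZ) (by omega)]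
            exact hXZ hr2
          · rw [getElem_of_getElem? (show (W :: (l1 ++ X :: (r2 ++ [Z])))[i]? = some X by rw [← h2]; exact eX) (by omega),
              getElem_of_getElem? (show (W :: (l1 ++ X :: (r2 ++ [Z])))[i+1]? = some (r2[0]'hk0) by
                rw [show i+1 = l1.length+2+0 from by omega]; exact eR 0 hk0) (by omega)]
            exact adj_of_head (hXr2 hk0)
        · have ev := eR (i - l1.length - 2) (by omega)
          rw [show l1.length + 2 + (i - l1.length - 2) = i from by omega] at ev
          rcases Nat.lt_or_ge (i+1) (l1.length + r2.length + 2) with h3 | h3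
          · have ev2 := eR (i - l1.length - 1) (by omega)
            rw [show l1.length + 2 + (i - l1.length - 1) = i + 1 from by omega] at ev2
            rw [getElem_of_getElem? ev (by omega), getElem_of_getElem? ev2 (by omega)]
            have := chain'_getElem hc2 (i := i - l1.length - 2) (by omega)
            rw [getElem_idx_congr (show i - l1.length - 2 + 1 = i - l1.length - 1 from by omega)] at this
            exact Or.inr (Or.inr (Or.inl this))
          · rw [getElem_of_getElem? ev (by omega),
              getElem_of_getElem? (show (W :: (l1 ++ X :: (r2 ++ [Z])))[i+1]? = some Z by
                rw [show i+1 = l1.length+r2.length+2 from by omega]; exact eZ) (by omega)]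
            have := hZr2 (by omega)
            rw [getElem_idx_congr (show r2.length - 1 = i - l1.length - 2 from by omega)] at this
            exact adj_symm (adj_of_head this)
  · rw [getLast?_eq_getElem? (by simp), plen,
      show l1.length + r2.length + 3 - 1 = l1.length + r2.length + 2 from by omega]
    exact eZ
  · intro i v h1 h2 hv
    rw [plen] at h2
    rcases Nat.lt_or_ge i (l1.length + 1) with hiL | hiL
    · have ev := eL (i-1) (by omega)
      rw [show i - 1 + 1 = i from by omega] at ev
      rw [ev] at hv; cases hv
      have hcol := colL i h1 (by omega)
      have hmem : (l1[i-1]'(by omega)) ∈ S := hS1 _ (List.getElem_mem _)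
      exact ⟨fun _ => ⟨_, Or.inr hmem, Relation.ReflTransGen.refl⟩, fun hn => absurd hcol hn⟩
    · rcases Nat.eq_or_lt_of_le hiL with h2' | h2'
      · have hvX : v = X := by
          rw [h2'] at eX; rw [eX] at hv; exact (Option.some.inj hv).symm
        subst hvX
        refine ⟨fun hc => absurd ?_ ncolX, fun _ => hXS⟩
        rwa [h2']
      · have ev := eR (i - l1.length - 2) (by omega)
        rw [show l1.length + 2 + (i - l1.length - 2) = i from by omega] at ev
        rw [ev] at hv; cases hv
        have hcol := colR i (by omega) (by omega)
        have hmem : (r2[i - l1.length - 2]'(by omega)) ∈ S := hS2 _ (List.getElem_mem _)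
        exact ⟨fun _ => ⟨_, Or.inr hmem, Relation.ReflTransGen.refl⟩, fun hn => absurd hcol hn⟩

end MixedGraph

namespace MixedGraph

variable {V : Type*} {G : MixedGraph V}

lemma induce_head {S : Set V} {a b : V} (h : (G.induce S).head a b) : G.head a b := by
  rcases h with h | h
  · exact Or.inl h.1
  · exact Or.inr h.1

lemma induce_anc {S : Set V} {a b : V} (h : (G.induce S).anc a b) : G.anc a b :=
  Relation.ReflTransGen.mono (r := (G.induce S).dir) (p := G.dir) (fun _ _ hxy => hxy.1) _ _ h

lemma induce_adj_mem {S : Set V} {a b : V} (h : (G.induce S).adj a b) : a ∈ S ∧ b ∈ S := by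
  rcases h with h | h | h | h
  · exact ⟨h.2.1, h.2.2⟩
  · exact ⟨h.2.2, h.2.1⟩
  · exact ⟨h.2.1, h.2.2⟩
  · exact ⟨h.2.1, h.2.2⟩

lemma analyze_mconn (hA : G.Ancestral) {X W Z : V} {q : List V}
    (hq : (G.induce {v | v ≠ X}).MConn q W Z {v | v ≠ X ∧ v ≠ W ∧ ¬ G.anc Z v})
    (hWZ : W ≠ Z) (hZW : ¬ G.anc Z W) :
    W ∈ G.paPlus Z := by
  obtain ⟨⟨⟨hch, hnd, hlen⟩, hh, hl⟩, hint⟩ := hq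
  set S : Set V := {v | v ≠ X ∧ v ≠ W ∧ ¬ G.anc Z v} with hS
  set n : ℕ := q.length - 1 with hn
  have hne : q ≠ [] := by intro h; rw [h] at hlen; simp at hlen
  have hq0 : q[0]? = some W := by rw [← List.head?_eq_getElem?]; exact hh
  have hqn : q[n]? = some Z := by rw [hn, ← getLast?_eq_getElem? hne]; exact hl
  have hq0' : q[0]'(by omega) = W := getElem_of_getElem? hq0 (by omega)
  have hqn' : q[n]'(by omega) = Z := getElem_of_getElem? hqn (by omega)
  have hdist : ∀ (i j : ℕ) (hi : i < q.length) (hj : j < q.length),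
      q[i]'hi = q[j]'hj → i = j := by
    intro i j hi hj h
    exact (List.Nodup.getElem_inj_iff hnd).mp h
  have hadj : ∀ (i : ℕ) (_ : i + 1 < q.length),
      (G.induce {v | v ≠ X}).adj (q[i]'(by omega)) (q[i+1]'(by omega)) :=
    fun i hi => chain'_getElem hch hi
  have hvne : ∀ (i : ℕ) (hi : i < q.length), q[i]'hi ≠ X := by
    intro i hi
    rcases Nat.lt_or_ge (i+1) q.length with h | h
    · exact (induce_adj_mem (hadj i h)).1
    · have h1 : 1 ≤ i := by omega
      have := (induce_adj_mem (hadj (i-1) (by omega))).2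
      rwa [getElem_idx_congr (show i - 1 + 1 = i from by omega)] at this
  have hintern_ne : ∀ (i : ℕ) (_ : 1 ≤ i) (_ : i < n),
      q[i]'(by omega) ≠ W ∧ q[i]'(by omega) ≠ Z := by
    intro i h1 h2
    constructor
    · intro h
      have := hdist i 0 (by omega) (by omega) (by rw [h, hq0'])
      omega
    · intro h
      have := hdist i n (by omega) (by omega) (by rw [h, hqn'])
      omega
  -- no internal collider can be a strict descendant of Z
  have NC : ∀ (i : ℕ) (_ : 1 ≤ i) (_ : i < n), G.anc Z (q[i]'(by omega)) →
      q[i]'(by omega) ≠ Z → ¬ (G.induce {v | v ≠ X}).ColliderAt q i := by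
    intro i h1 h2 hZq hqZ hcol
    have hmem := (hint i (q[i]'(by omega)) h1 (by omega)
      (List.getElem?_eq_getElem (by omega))).1 hcol
    obtain ⟨y, hy, hanc⟩ := hmem
    have hanc' : G.anc (q[i]'(by omega)) y := induce_anc hanc
    rcases hy with hy | hy
    · rcases hy with hy | hy
      · subst hy
        exact hZW (anc_trans hZq hanc')
      · rw [Set.mem_singleton_iff] at hy
        subst hy
        exact hqZ (anc_antisymm hA hZq hanc').symm
    · exact hy.2.2 (anc_trans hZq hanc')
  -- rightward march
  have marchR : ∀ (d j : ℕ) (_ : 1 ≤ j) (_ : j < n) (_ : n - j ≤ d)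
      (_ : G.anc Z (q[j]'(by omega))) (_ : q[j]'(by omega) ≠ Z),
      G.dir (q[j]'(by omega)) (q[j+1]'(by omega)) → False := by
    intro d
    induction d with
    | zero => intro j h1 h2 h3; omega
    | succ d ih =>
      intro j h1 h2 h3 hZq hqZ hdir
      by_cases hj1 : j + 1 = n
      · have : q[j+1]'(by omega) = Z := by
          rw [getElem_idx_congr hj1]; exact hqn'
        rw [this] at hdir
        exact hqZ (anc_antisymm hA (anc_of_dir hdir) hZq)
      · have hj1n : j + 1 < n := by omega
        have hZq1 : G.anc Z (q[j+1]'(by omega)) := anc_trans hZq (anc_of_dir hdir)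
        have hq1Z : q[j+1]'(by omega) ≠ Z := by
          intro h
          have := hdist (j+1) n (by omega) (by omega) (by rw [h, hqn'])
          omega
        have hncol := NC (j+1) (by omega) hj1n hZq1 hq1Z
        have headL : (G.induce {v | v ≠ X}).head (q[j]'(by omega)) (q[j+1]'(by omega)) :=
          Or.inl ⟨hdir, hvne j (by omega), hvne (j+1) (by omega)⟩
        have hcR : ¬ (G.induce {v | v ≠ X}).head (q[j+2]'(by omega)) (q[j+1]'(by omega)) := by
          intro hR
          apply hncol
          refine ⟨q[j]'(by omega), q[j+1]'(by omega), q[j+2]'(by omega), ?_, ?_, ?_, headL, hR⟩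
          · rw [show j + 1 - 1 = j from by omega]
            exact List.getElem?_eq_getElem (by omega)
          · exact List.getElem?_eq_getElem (by omega)
          · exact List.getElem?_eq_getElem (by omega)
        have hedge := hadj (j+1) (by omega)
        rcases hedge with he | he | he | he
        · exact ih (j+1) (by omega) hj1n (by omega) hZq1 hq1Z he.1
        · exact hcR (Or.inl he)
        · exact hcR (Or.inr (((G.induce {v | v ≠ X})).bi_symm _ _ he))
        · exact (hA.2.2 _ _ he.1 (q[j]'(by omega))).1 hdir
  -- leftward march
  have marchL : ∀ (j : ℕ) (_ : 1 ≤ j) (_ : j < n) (_ : G.anc Z (q[j]'(by omega)))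
      (_ : q[j]'(by omega) ≠ Z), G.dir (q[j]'(by omega)) (q[j-1]'(by omega)) → False := by
    intro j
    induction j using Nat.strong_induction_on with
    | _ j ih =>
      intro h1 h2 hZq hqZ hdir
      by_cases hj0 : j = 1
      · have : q[j-1]'(by omega) = W := by
          rw [getElem_idx_congr (show j - 1 = 0 from by omega)]; exact hq0'
        rw [this] at hdir
        exact hZW (anc_trans hZq (anc_of_dir hdir))
      · have hj2 : 2 ≤ j := by omega
        have hZq1 : G.anc Z (q[j-1]'(by omega)) := anc_trans hZq (anc_of_dir hdir)
        have hq1Z : q[j-1]'(by omega) ≠ Z := by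
          intro h
          have := hdist (j-1) n (by omega) (by omega) (by rw [h, hqn'])
          omega
        have hncol := NC (j-1) (by omega) (by omega) hZq1 hq1Z
        have headR : (G.induce {v | v ≠ X}).head (q[j]'(by omega)) (q[j-1]'(by omega)) :=
          Or.inl ⟨hdir, hvne j (by omega), hvne (j-1) (by omega)⟩
        have hcL : ¬ (G.induce {v | v ≠ X}).head (q[j-2]'(by omega)) (q[j-1]'(by omega)) := by
          intro hL
          apply hncol
          refine ⟨q[j-2]'(by omega), q[j-1]'(by omega), q[j]'(by omega), ?_, ?_, ?_, hL, ?_⟩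
          · rw [show j - 1 - 1 = j - 2 from by omega]
            exact List.getElem?_eq_getElem (by omega)
          · exact List.getElem?_eq_getElem (by omega)
          · rw [show j - 1 + 1 = j from by omega]
            exact List.getElem?_eq_getElem (by omega)
          · exact headR
        have hedge := hadj (j-2) (by omega)
        rw [getElem_idx_congr (show j - 2 + 1 = j - 1 from by omega)] at hedge
        rcases hedge with he | he | he | he
        · exact hcL (Or.inl he)
        · exact ih (j-1) (by omega) (by omega) (by omega) hZq1 hq1Z
            (by rw [getElem_idx_congr (show j - 1 - 1 = j - 2 from by omega)]; exact he.1)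
        · exact hcL (Or.inr he)
        · have hund := (G.und_symm _ _ he.1)
          exact (hA.2.2 _ _ hund (q[j]'(by omega))).1 hdir
  -- no internal vertex is a strict descendant of Z
  have nosdesc : ∀ (i : ℕ) (_ : 1 ≤ i) (_ : i < n), ¬ G.anc Z (q[i]'(by omega)) := by
    intro i h1 h2 hZq
    have hqZ : q[i]'(by omega) ≠ Z := (hintern_ne i h1 h2).2
    obtain ⟨c, hcZ, hc⟩ : ∃ c, G.anc Z c ∧ G.dir c (q[i]'(by omega)) := by
      rcases Relation.ReflTransGen.cases_tail hZq with h | ⟨c, h1c, h2c⟩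
      · exact absurd h hqZ
      · exact ⟨c, h1c, h2c⟩
    have hncol := NC i h1 h2 hZq hqZ
    have hpair : ¬ ((G.induce {v | v ≠ X}).head (q[i-1]'(by omega)) (q[i]'(by omega)) ∧
        (G.induce {v | v ≠ X}).head (q[i+1]'(by omega)) (q[i]'(by omega))) := by
      rintro ⟨hL, hR⟩
      apply hncol
      exact ⟨q[i-1]'(by omega), q[i]'(by omega), q[i+1]'(by omega),
        List.getElem?_eq_getElem (by omega), List.getElem?_eq_getElem (by omega),
        List.getElem?_eq_getElem (by omega), hL, hR⟩
    by_cases hL : (G.induce {v | v ≠ X}).head (q[i-1]'(by omega)) (q[i]'(by omega))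
    · have hR : ¬ (G.induce {v | v ≠ X}).head (q[i+1]'(by omega)) (q[i]'(by omega)) :=
        fun h => hpair ⟨hL, h⟩
      have hedge := hadj i (by omega)
      rcases hedge with he | he | he | he
      · exact marchR n i h1 h2 (by omega) hZq hqZ he.1
      · exact hR (Or.inl he)
      · exact hR (Or.inr (((G.induce {v | v ≠ X})).bi_symm _ _ he))
      · exact (hA.2.2 _ _ he.1 c).1 hc
    · have hedge := hadj (i-1) (by omega)
      rw [getElem_idx_congr (show i - 1 + 1 = i from by omega)] at hedge
      rcases hedge with he | he | he | he
      · exact hL (Or.inl he)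
      · exact marchL i h1 h2 hZq hqZ he.1
      · exact hL (Or.inr he)
      · have hund := (G.und_symm _ _ he.1)
        exact (hA.2.2 _ _ hund c).1 hc
  have allcol : ∀ (i : ℕ) (_ : 1 ≤ i) (_ : i < n), (G.induce {v | v ≠ X}).ColliderAt q i := by
    intro i h1 h2
    by_contra hncol
    have hnotS := (hint i (q[i]'(by omega)) h1 (by omega)
      (List.getElem?_eq_getElem (by omega))).2 hncol
    rw [hS] at hnotS
    simp only [Set.mem_setOf_eq, not_and, not_not] at hnotS
    exact nosdesc i h1 h2 (hnotS (hvne i (by omega)) (hintern_ne i h1 h2).1)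
  by_cases hn1 : n = 1
  · have hedge := hadj 0 (by omega)
    rw [hq0'] at hedge
    rw [getElem_idx_congr (show (0:ℕ)+1 = n from by omega), hqn'] at hedge
    rcases hedge with he | he | he | he
    · exact mem_paPlus_pa he.1
    · exact absurd (anc_of_dir he.1) hZW
    · exact mem_paPlus_dis (mem_district_of_bi (G.bi_symm _ _ he.1))
    · exact mem_paPlus_nbr (G.und_symm _ _ he.1)
  · have hn2 : 2 ≤ n := by omega
    have hlast : q[n-1]'(by omega) ∈ G.district Z := by
      have hcol := allcol (n-1) (by omega) (by omega)
      have hR := colliderAt_head_right hcol (List.getElem?_eq_getElem (by omega))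
        (by rw [show n - 1 + 1 = n from by omega]; exact hqn)
      rcases induce_head hR with h | h
      · exact absurd (anc_of_dir h) (nosdesc (n-1) (by omega) (by omega))
      · exact mem_district_of_bi h
    have dkey : ∀ (d i : ℕ) (_ : 1 ≤ i) (_ : i < n) (_ : n - 1 - i ≤ d),
        q[i]'(by omega) ∈ G.district Z := by
      intro d
      induction d with
      | zero =>
        intro i h1 h2 h3
        have hieq : i = n - 1 := by omega
        rw [getElem_idx_congr hieq]
        exact hlast
      | succ d ih =>
        intro i h1 h2 h3
        by_cases hi : i = n - 1
        · rw [getElem_idx_congr hi]; exact hlast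
        · have hnext := ih (i+1) (by omega) (by omega) (by omega)
          have hcolL := colliderAt_head_left (allcol (i+1) (by omega) (by omega))
            (by rw [show i + 1 - 1 = i from by omega]; exact List.getElem?_eq_getElem (by omega))
            (List.getElem?_eq_getElem (by omega))
          have hcolR := colliderAt_head_right (allcol i h1 h2)
            (List.getElem?_eq_getElem (by omega)) (List.getElem?_eq_getElem (by omega))
          have hbi := head_head_bi hA (induce_head hcolL) (induce_head hcolR)
          exact district_tail hnext (G.bi_symm _ _ hbi)
    have h1D := dkey n 1 (le_refl 1) (by omega) (by omega)
    have hcolW := colliderAt_head_left (allcol 1 (le_refl 1) (by omega))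
      (by rw [show (1:ℕ) - 1 = 0 from rfl]; exact hq0) (List.getElem?_eq_getElem (by omega))
    rcases induce_head hcolW with h | h
    · exact mem_paPlus_paDis h1D h
    · exact mem_paPlus_dis (district_tail h1D (G.bi_symm _ _ h))

end MixedGraph

namespace MixedGraph

variable {V : Type*} {G : MixedGraph V}

lemma exists_anc_maximal [Fintype V] (hA : G.Ancestral) (M : Set V) (hM : M.Nonempty) :
    ∃ Z ∈ M, ∀ y ∈ M, G.anc Z y → y = Z := by
  classical
  obtain ⟨X0, hX0⟩ := hM
  obtain ⟨Z, hZs, hZmax⟩ := Finset.exists_max_image (Finset.univ.filter (· ∈ M))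
    (fun z => (Finset.univ.filter (fun a => a ∈ M ∧ G.anc a z)).card)
    ⟨X0, by simp [hX0]⟩
  refine ⟨Z, by simpa using hZs, ?_⟩
  intro y hy hanc
  by_contra hne
  have hsub : Finset.univ.filter (fun a => a ∈ M ∧ G.anc a Z) ⊂
      Finset.univ.filter (fun a => a ∈ M ∧ G.anc a y) := by
    constructor
    · intro a ha
      simp only [Finset.mem_filter, Finset.mem_univ, true_and] at ha ⊢
      exact ⟨ha.1, anc_trans ha.2 hanc⟩
    · intro hcon
      have hyy : y ∈ Finset.univ.filter (fun a => a ∈ M ∧ G.anc a y) := by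
        simp [hy, anc_refl]
      have := hcon hyy
      simp only [Finset.mem_filter, Finset.mem_univ, true_and] at this
      exact hne (anc_antisymm hA hanc this.2).symm
  exact absurd (hZmax y (by simp [hy])) (by simpa using Finset.card_lt_card hsub)

end MixedGraph

namespace MixedGraph

variable {V : Type*} {G : MixedGraph V}

lemma getElem_reverse' {l : List V} {i : ℕ} (h : i < l.length) :
    l.reverse[i]'(by simpa using h) = l[l.length-1-i]'(by omega) := by
  rw [List.getElem_reverse]

lemma chain'_bi_reverse {l : List V} (h : l.Chain' G.bi) : l.reverse.Chain' G.bi := by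
  refine List.isChain_reverse.mpr ?_
  exact h.imp (fun a b hab => G.bi_symm _ _ hab)

end MixedGraph


open MixedGraph in
/-- if `X` is removable in a MAG `H`, then `|Mb(X)| ≤ δ⁺(H)`. -/
theorem stmt9 {V : Type*} [Fintype V] (H : MixedGraph V) (hH : H.IsMAG)
    (X : V) (hrem : H.Removable X) :
    (H.Mb X).ncard ≤ H.deltaPlus := by
  classical
  have hA := hH.1
  obtain ⟨Z, hZM, hZmax⟩ := exists_anc_maximal hA (H.Mb X ∪ {X}) ⟨X, Or.inr rfl⟩
  suffices hsub : H.Mb X ⊆ H.paPlus Z by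
    calc (H.Mb X).ncard ≤ (H.paPlus Z).ncard := Set.ncard_le_ncard hsub (Set.toFinite _)
    _ ≤ H.deltaPlus := by exact Finset.le_sup (f := fun z : V => (H.paPlus z).ncard) (Finset.mem_univ Z)
  intro W hW
  have hWMb : W ∈ H.Mb X := hW
  have hnotanc : ∀ y ∈ H.Mb X ∪ {X}, y ≠ Z → ¬ H.anc Z y :=
    fun y hy hne ha => hne (hZmax y hy ha)
  by_cases hWZ : W = Z
  · rw [hWZ]; exact mem_paPlus_dis (mem_district_self Z)
  have hWX : W ≠ X := fun h => (not_mem_Mb_self X) (h ▸ hWMb)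
  obtain ⟨p1, hp1, hp1h, hp1l⟩ := hW
  obtain ⟨l1, hp1eq, hc1, hadjWX, hheads1⟩ := colliderPath_struct hA hp1 hp1h hp1l
  have hp1nd : (W :: (l1 ++ [X])).Nodup := by rw [← hp1eq]; exact hp1.1.2.1
  have hWnl1 : W ∉ l1 := fun h => (List.nodup_cons.mp hp1nd).1 (List.mem_append_left _ h)
  have hl1nd : l1.Nodup := ((List.nodup_append.mp (List.nodup_cons.mp hp1nd).2)).1
  have hXnl1 : X ∉ l1 := fun h =>
    ((List.nodup_append'.mp (List.nodup_cons.mp hp1nd).2)).2.2 h (by simp)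
  have hmem1 : ∀ v ∈ l1, v ∈ H.Mb X := by
    intro v hv
    refine mem_Mb_of_colliderPath hp1 hp1l ?_ (fun h => hXnl1 (h ▸ hv))
    rw [hp1eq]
    exact List.mem_cons_of_mem _ (List.mem_append_left _ hv)
  have hook1 : ∀ (j : ℕ) (hj : j < l1.length),
      (l1[j]'hj) ∈ H.district Z → W ∈ H.paPlus Z := by
    intro j hj hjD
    have h0 : 0 < l1.length := by omega
    have h01 : (l1[0]'h0) ∈ H.district Z :=
      district_trans hjD (district_symm (chain'_bi_rtg hc1 (Nat.zero_le j) hj))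
    rcases (hheads1 h0).1 with h | h
    · exact mem_paPlus_paDis h01 h
    · exact mem_paPlus_dis (district_tail h01 (H.bi_symm _ _ h))
  by_cases hZX : Z = X
  · -- case Z = X
    rw [hZX] at hook1 hnotanc hZmax ⊢
    by_cases hl1 : l1 = []
    · rcases hadjWX hl1 with h | h | h | h
      · exact mem_paPlus_pa h
      · exact absurd (anc_of_dir h) (hnotanc W (Or.inl hWMb) hWX)
      · exact mem_paPlus_dis (mem_district_of_bi (H.bi_symm _ _ h))
      · exact mem_paPlus_nbr (H.und_symm _ _ h)
    · have h0 : 0 < l1.length := List.length_pos_iff.mpr hl1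
      rcases (hheads1 h0).2 with h | h
      · have hvm : (l1[l1.length-1]'(by omega)) ∈ H.Mb X :=
          hmem1 _ (List.getElem_mem _)
        have heq := hZmax _ (Or.inl hvm) (anc_of_dir h)
        exact absurd (heq ▸ List.getElem_mem _) hXnl1
      · exact hook1 (l1.length - 1) (by omega) (mem_district_of_bi h)
  · -- case Z ≠ X
    have hnotancX : ¬ H.anc Z X := hnotanc X (Or.inr rfl) (fun h => hZX h.symm)
    have hZMb : Z ∈ H.Mb X := by
      rcases hZM with h | h
      · exact h
      · exact absurd h hZX
    obtain ⟨p2, hp2, hp2h, hp2l⟩ := hZMb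
    obtain ⟨l2, hp2eq, hc2, hadjZX, hheads2⟩ := colliderPath_struct hA hp2 hp2h hp2l
    have hp2nd : (Z :: (l2 ++ [X])).Nodup := by rw [← hp2eq]; exact hp2.1.2.1
    have hZnl2 : Z ∉ l2 := fun h => (List.nodup_cons.mp hp2nd).1 (List.mem_append_left _ h)
    have hl2nd : l2.Nodup := ((List.nodup_append.mp (List.nodup_cons.mp hp2nd).2)).1
    have hXnl2 : X ∉ l2 := fun h =>
      ((List.nodup_append'.mp (List.nodup_cons.mp hp2nd).2)).2.2 h (by simp)
    have hmem2 : ∀ v ∈ l2, v ∈ H.Mb X := by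
      intro v hv
      refine mem_Mb_of_colliderPath hp2 hp2l ?_ (fun h => hXnl2 (h ▸ hv))
      rw [hp2eq]
      exact List.mem_cons_of_mem _ (List.mem_append_left _ hv)
    have hbiZ0 : ∀ h0 : 0 < l2.length, H.bi Z (l2[0]'h0) := by
      intro h0
      rcases (hheads2 h0).1 with h | h
      · have heq := hZmax _ (Or.inl (hmem2 _ (List.getElem_mem _))) (anc_of_dir h)
        exact absurd (heq ▸ List.getElem_mem _) hZnl2
      · exact h
    have hl2D : ∀ (j : ℕ) (hj : j < l2.length), (l2[j]'hj) ∈ H.district Z := by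
      intro j hj
      exact district_trans (mem_district_of_bi (hbiZ0 (by omega)))
        (chain'_bi_rtg hc2 (Nat.zero_le j) hj)
    -- the main removability-based argument
    have main : ((∀ h : 0 < l1.length, ¬ H.head (l1[l1.length-1]'(by omega)) X) ∧
        (l1 = [] → ¬ H.head W X) ∨
        (∀ h : 0 < l2.reverse.length, ¬ H.head (l2.reverse[0]'h) X) ∧
        (l2.reverse = [] → ¬ H.head Z X)) → W ∈ H.paPlus Z := by
      intro hncL
      by_cases hWl2 : W ∈ l2
      · obtain ⟨j, hj, hjv⟩ := List.mem_iff_getElem.mp hWl2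
        exact mem_paPlus_dis (hjv ▸ hl2D j hj)
      by_cases hZl1 : Z ∈ l1
      · obtain ⟨j, hj, hjv⟩ := List.mem_iff_getElem.mp hZl1
        exact hook1 j hj (by rw [hjv]; exact mem_district_self Z)
      by_cases hcom : ∃ v, v ∈ l1 ∧ v ∈ l2
      · obtain ⟨v, hv1, hv2⟩ := hcom
        obtain ⟨j, hj, hjv⟩ := List.mem_iff_getElem.mp hv1
        obtain ⟨j2, hj2, hjv2⟩ := List.mem_iff_getElem.mp hv2
        exact hook1 j hj (by rw [hjv, ← hjv2]; exact hl2D j2 hj2)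
      push_neg at hcom
      have hnd : (W :: (l1 ++ X :: (l2.reverse ++ [Z]))).Nodup := by
        simp only [List.nodup_cons, List.nodup_append', List.nodup_reverse,
          List.nodup_singleton, List.mem_append, List.mem_cons, List.mem_reverse,
          List.mem_singleton, List.not_mem_nil, List.disjoint_left, not_or]
        refine ⟨⟨hWnl1, hWX, hWl2, hWZ, not_false⟩, hl1nd,
          ⟨⟨hXnl2, fun h => hZX h.symm, not_false⟩, hl2nd, ⟨not_false, List.nodup_nil⟩,
            fun a ha => ⟨fun h => hZnl2 (h ▸ ha), not_false⟩⟩,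
          fun a ha => ⟨fun h => hXnl1 (h ▸ ha), hcom a ha, fun h => hZl1 (h ▸ ha), not_false⟩⟩
      have hXr2 : ∀ h : 0 < l2.reverse.length, H.head X (l2.reverse[0]'h) := by
        intro h
        rw [getElem_reverse' (by simpa using h)]
        exact (hheads2 (by simpa using h)).2
      have hZr2 : ∀ h : 0 < l2.reverse.length,
          H.head Z (l2.reverse[l2.reverse.length-1]'(by omega)) := by
        intro h
        have h0 : 0 < l2.length := by simpa using h
        have e1 : l2.reverse[l2.reverse.length-1]'(by omega) =
            l2[l2.length - 1 - (l2.reverse.length - 1)]'(by rw [List.length_reverse]; omega) :=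
          getElem_reverse' (by rw [List.length_reverse]; omega)
        rw [e1, getElem_idx_congr (show l2.length - 1 - (l2.reverse.length - 1) = 0 from by
          rw [List.length_reverse]; omega)]
        exact Or.inr (hbiZ0 h0)
      have hXZ' : l2.reverse = [] → H.adj X Z := by
        intro he
        have hl2e : l2 = [] := by simpa using he
        rcases hadjZX hl2e with h | h | h | h
        · exact absurd (anc_of_dir h) hnotancX
        · exact Or.inl h
        · exact Or.inr (Or.inr (Or.inl (H.bi_symm _ _ h)))
        · exact Or.inr (Or.inr (Or.inr (H.und_symm _ _ h)))
      have hS1 : ∀ v ∈ l1, v ∈ {v | v ≠ X ∧ v ≠ W ∧ ¬ H.anc Z v} := by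
        intro v hv
        exact ⟨fun h => hXnl1 (h ▸ hv), fun h => hWnl1 (h ▸ hv),
          hnotanc v (Or.inl (hmem1 v hv)) (fun h => hZl1 (h ▸ hv))⟩
      have hS2 : ∀ v ∈ l2.reverse, v ∈ {v | v ≠ X ∧ v ≠ W ∧ ¬ H.anc Z v} := by
        intro v hv
        have hv2 : v ∈ l2 := List.mem_reverse.mp hv
        exact ⟨fun h => hXnl2 (h ▸ hv2), fun h => hWl2 (h ▸ hv2),
          hnotanc v (Or.inl (hmem2 v hv2)) (fun h => hZnl2 (h ▸ hv2))⟩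
      have hXS : X ∉ {v | v ≠ X ∧ v ≠ W ∧ ¬ H.anc Z v} := fun h => h.1 rfl
      have hmc := build_mconn (G := H) hA {v | v ≠ X ∧ v ≠ W ∧ ¬ H.anc Z v}
        hc1 (chain'_bi_reverse hc2) (fun h0 => (hheads1 h0).1) (fun h0 => (hheads1 h0).2)
        hXr2 hZr2 hadjWX hXZ' hncL hnd hS1 hS2 hXS
      have hS'sub : {v | v ≠ X ∧ v ≠ W ∧ ¬ H.anc Z v} ⊆ {v | v ≠ X ∧ v ≠ W ∧ v ≠ Z} := by
        intro v hv
        exact ⟨hv.1, hv.2.1, fun h => hv.2.2 (by rw [h]; exact anc_refl Z)⟩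
      have hnsep : ¬ (H.induce {v | v ≠ X}).MSep W Z {v | v ≠ X ∧ v ≠ W ∧ ¬ H.anc Z v} := by
        intro hs
        exact ((hrem W Z hWX hZX hWZ _ hS'sub).mpr hs) _ hmc
      rcases not_forall.mp hnsep with ⟨q, hq⟩
      rw [not_not] at hq
      exact analyze_mconn hA hq hWZ (hnotanc W (Or.inl hWMb) hWZ)
    by_cases hbiR : (∃ h0 : 0 < l2.length, H.bi X (l2[l2.length-1]'(by omega))) ∨
        (l2 = [] ∧ H.bi X Z)
    · have hXD : X ∈ H.district Z := by
        rcases hbiR with ⟨h0, hbi⟩ | ⟨hl2e, hbi⟩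
        · exact district_tail (hl2D _ (by omega)) (H.bi_symm _ _ hbi)
        · exact mem_district_of_bi (H.bi_symm _ _ hbi)
      have hspouse : ∃ z, H.bi z X := by
        rcases hbiR with ⟨h0, hbi⟩ | ⟨hl2e, hbi⟩
        · exact ⟨_, H.bi_symm _ _ hbi⟩
        · exact ⟨_, H.bi_symm _ _ hbi⟩
      by_cases hl1 : l1 = []
      · rcases hadjWX hl1 with h | h | h | h
        · exact mem_paPlus_paDis hXD h
        · apply main
          left
          refine ⟨fun h0 => absurd h0 (by simp [hl1]), fun _ => ?_⟩
          rintro (hh | hh)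
          · exact not_dir_of_dir hA h hh
          · exact not_bi_of_dir hA h (H.bi_symm _ _ hh)
        · exact mem_paPlus_dis (district_tail hXD (H.bi_symm _ _ h))
        · obtain ⟨z, hz⟩ := hspouse
          exact absurd hz (fun hzz => (hA.2.2 X W (H.und_symm _ _ h) z).2 hzz)
      · have h0 : 0 < l1.length := List.length_pos_iff.mpr hl1
        rcases (hheads1 h0).2 with h | h
        · apply main
          left
          refine ⟨fun h0' => ?_, fun he => absurd he hl1⟩
          rintro (hh | hh)
          · exact not_dir_of_dir hA h hh
          · exact not_bi_of_dir hA h (H.bi_symm _ _ hh)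
        · exact hook1 (l1.length-1) (by omega) (district_tail hXD h)
    · apply main
      right
      have hb1 : ∀ h0 : 0 < l2.length, ¬ H.bi X (l2[l2.length-1]'(by omega)) :=
        fun h0 hb => hbiR (Or.inl ⟨h0, hb⟩)
      have hb2 : l2 = [] → ¬ H.bi X Z := fun he hb => hbiR (Or.inr ⟨he, hb⟩)
      refine ⟨fun h0 => ?_, fun he => ?_⟩
      · rw [getElem_reverse' (by simpa using h0)]
        rintro (hh | hh)
        · rcases (hheads2 (by simpa using h0)).2 with h | h
          · exact not_dir_of_dir hA h hh
          · exact hb1 (by simpa using h0) h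
        · exact hb1 (by simpa using h0) (H.bi_symm _ _ hh)
      · have hl2e : l2 = [] := by simpa using he
        rintro (hh | hh)
        · exact hnotancX (anc_of_dir hh)
        · exact hb2 hl2e (H.bi_symm _ _ hh)
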